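/- (Bihari inequality) Let u, f : [0, ∞) → [0, ∞) be continuous functions, let w : [0, ∞) → [0, ∞) be continuous and nondecreasing with w(y) > 0 for all y > 0, and let M > 0. Suppose that u(t) ≤ M + ∫₀ᵗ f(s) w(u(s)) ds for all t ≥ 0. Then for every t ≥ 0 and every x ≥ M such that ∫₀ᵗ f(s) ds ≤ ∫_M^x dy / w(y), one has u(t) ≤ x. -/

import Mathlib

open Set intervalIntegral MeasureTheory

/-- Bihari's inequality: if `u(t) ≤ M + ∫₀ᵗ f(s) w(u(s)) ds` on `[0,∞)` with `u, f ≥ 0`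
continuous, `w` continuous, nondecreasing, positive on `(0,∞)`, and `M > 0`, then
`u(t) ≤ x` for every `x ≥ M` such that `∫₀ᵗ f(s) ds ≤ ∫_M^x dy / w(y)`. -/
theorem bihari_inequality (u f w : ℝ → ℝ) (M : ℝ) (hM : 0 < M)
    (hu_cont : ContinuousOn u (Ici 0)) (hu_nonneg : ∀ t ∈ Ici (0 : ℝ), 0 ≤ u t)
    (hf_cont : ContinuousOn f (Ici 0)) (hf_nonneg : ∀ t ∈ Ici (0 : ℝ), 0 ≤ f t)
    (hw_cont : ContinuousOn w (Ici 0)) (hw_mono : MonotoneOn w (Ici 0))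
    (hw_nonneg : ∀ y ∈ Ici (0 : ℝ), 0 ≤ w y) (hw_pos : ∀ y : ℝ, 0 < y → 0 < w y)
    (hineq : ∀ t : ℝ, 0 ≤ t → u t ≤ M + ∫ s in (0:ℝ)..t, f s * w (u s)) :
    ∀ t : ℝ, 0 ≤ t → ∀ x : ℝ, M ≤ x →
      (∫ s in (0:ℝ)..t, f s) ≤ (∫ y in M..x, 1 / w y) → u t ≤ x := by
  intro t ht x hx hint
  -- extend all functions to ℝ
  set F : ℝ → ℝ := fun s => f (max s 0) with hF
  set U : ℝ → ℝ := fun s => u (max s 0) with hU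
  set W : ℝ → ℝ := fun y => w (max y 0) with hW
  have hmax : Continuous (fun s : ℝ => max s 0) := continuous_id.max continuous_const
  have hmem : ∀ s : ℝ, max s 0 ∈ Ici (0:ℝ) := fun s => Set.mem_Ici.mpr (le_max_right _ _)
  have hFc : Continuous F := hf_cont.comp_continuous hmax hmem
  have hUc : Continuous U := hu_cont.comp_continuous hmax hmem
  have hWc : Continuous W := hw_cont.comp_continuous hmax hmem
  have hFnn : ∀ s, 0 ≤ F s := fun s => hf_nonneg _ (hmem s)
  have hUnn : ∀ s, 0 ≤ U s := fun s => hu_nonneg _ (hmem s)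
  have hWnn : ∀ y, 0 ≤ W y := fun y => hw_nonneg _ (hmem y)
  have hWmono : Monotone W := fun a b h => hw_mono (hmem a) (hmem b) (max_le_max h le_rfl)
  have hWpos : ∀ y, 0 < y → 0 < W y := by
    intro y hy
    have : max y 0 = y := max_eq_left hy.le
    rw [hW]; simp only [this]; exact hw_pos y hy
  set g : ℝ → ℝ := fun s => F s * W (U s) with hg
  have hgc : Continuous g := hFc.mul (hWc.comp hUc)
  have hgnn : ∀ s, 0 ≤ g s := fun s => mul_nonneg (hFnn s) (hWnn _)
  set V : ℝ → ℝ := fun t => M + ∫ s in (0:ℝ)..t, g s with hV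
  have hVc : Continuous V :=
    continuous_const.add
      (intervalIntegral.continuous_primitive (fun a b => hgc.intervalIntegrable a b) 0)
  -- V' = g
  have hVderiv : ∀ s : ℝ, HasDerivAt V (g s) s := by
    intro s
    have := intervalIntegral.integral_hasDerivAt_right
      (hgc.intervalIntegrable 0 s)
      (hgc.stronglyMeasurable.stronglyMeasurableAtFilter)
      hgc.continuousAt
    exact this.const_add M
  -- u t ≤ V t for t ≥ 0
  have huV : ∀ s : ℝ, 0 ≤ s → u s ≤ V s := by
    intro s hs
    have hcongr : (∫ r in (0:ℝ)..s, f r * w (u r)) = ∫ r in (0:ℝ)..s, g r := by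
      apply intervalIntegral.integral_congr
      intro r hr
      rw [uIcc_of_le hs] at hr
      have hr0 : (0:ℝ) ≤ r := hr.1
      have : max r 0 = r := max_eq_left hr0
      simp only [hg, hF, hU, hW, this, max_eq_left (hu_nonneg r hr0)]
    have := hineq s hs
    rwa [hcongr] at this
  -- V ≥ M on [0, ∞)
  have hVM : ∀ s : ℝ, 0 ≤ s → M ≤ V s := by
    intro s hs
    have : 0 ≤ ∫ r in (0:ℝ)..s, g r :=
      intervalIntegral.integral_nonneg hs (fun r _ => hgnn r)
    simp only [hV]; linarith
  -- W positive on [M, ∞)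
  have hWposM : ∀ y : ℝ, M ≤ y → 0 < W y := fun y hy => hWpos y (hM.trans_le hy)
  -- G z = ∫_M^z 1/W
  set G : ℝ → ℝ := fun z => ∫ y in M..z, 1 / W y with hGdef
  have hWinv_contOn : ContinuousOn (fun y => 1 / W y) (Ici M) := by
    apply ContinuousOn.div continuousOn_const hWc.continuousOn
    intro y hy; exact (hWposM y hy).ne'
  have hWinv_intble : ∀ a b : ℝ, M ≤ a → M ≤ b →
      IntervalIntegrable (fun y => 1 / W y) volume a b := by
    intro a b ha hb
    apply ContinuousOn.intervalIntegrable
    apply hWinv_contOn.mono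
    rw [uIcc_eq_union]
    rintro y hy
    rcases hy with hy | hy
    · exact le_trans ha hy.1
    · exact le_trans hb hy.1
  have hGderiv : ∀ z : ℝ, M ≤ z → HasDerivAt G (1 / W z) z := by
    intro z hz
    apply intervalIntegral.integral_hasDerivAt_right (hWinv_intble M z le_rfl hz)
    · exact ((measurable_const.div hWc.measurable).stronglyMeasurable).stronglyMeasurableAtFilter
    · exact ContinuousAt.div continuousAt_const hWc.continuousAt (hWposM z hz).ne'
  -- H = G ∘ V, derivative g s / W (V s) on [0, t]
  set h' : ℝ → ℝ := fun s => g s / W (V s) with hh'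
  have hHderiv : ∀ s ∈ uIcc (0:ℝ) t, HasDerivAt (fun r => G (V r)) (h' s) s := by
    intro s hs
    rw [uIcc_of_le ht] at hs
    have hVs : M ≤ V s := hVM s hs.1
    have := (hGderiv (V s) hVs).comp s (hVderiv s)
    simpa [hh', div_eq_mul_inv, mul_comm, Function.comp_def] using this
  have hWVpos : ∀ s : ℝ, 0 ≤ s → 0 < W (V s) := fun s hs => hWposM _ (hVM s hs)
  have hh'_int : IntervalIntegrable h' volume 0 t := by
    apply ContinuousOn.intervalIntegrable
    apply ContinuousOn.div hgc.continuousOn (hWc.comp hVc).continuousOn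
    intro s hs
    rw [uIcc_of_le ht] at hs
    exact (hWVpos s hs.1).ne'
  have hftc : (∫ s in (0:ℝ)..t, h' s) = G (V t) - G (V 0) :=
    intervalIntegral.integral_eq_sub_of_hasDerivAt hHderiv hh'_int
  have hV0 : V 0 = M := by simp [hV]
  have hG0 : G (V 0) = 0 := by rw [hV0]; simp [hGdef]
  -- h' ≤ F on [0, t]
  have hh'leF : (∫ s in (0:ℝ)..t, h' s) ≤ ∫ s in (0:ℝ)..t, F s := by
    apply intervalIntegral.integral_mono_on ht hh'_int
      (hFc.intervalIntegrable 0 t)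
    intro s hs
    have hs0 : (0:ℝ) ≤ s := hs.1
    have hUV : U s ≤ V s := by
      have : max s 0 = s := max_eq_left hs0
      simp only [hU, this]; exact huV s hs0
    have hmono : W (U s) ≤ W (V s) := hWmono hUV
    rw [hh', div_le_iff₀ (hWVpos s hs0)]
    calc g s = F s * W (U s) := rfl
      _ ≤ F s * W (V s) := mul_le_mul_of_nonneg_left hmono (hFnn s)
  -- ∫ F = ∫ f on [0,t]
  have hFf : (∫ s in (0:ℝ)..t, F s) = ∫ s in (0:ℝ)..t, f s := by
    apply intervalIntegral.integral_congr
    intro s hs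
    rw [uIcc_of_le ht] at hs
    simp only [hF, max_eq_left hs.1]
  -- ∫_M^x 1/w = G x
  have hGx : (∫ y in M..x, 1 / w y) = G x := by
    apply intervalIntegral.integral_congr
    intro y hy
    rw [uIcc_of_le hx] at hy
    have : max y 0 = y := max_eq_left (hM.le.trans hy.1)
    simp only [hW, this]
  have hGVt : G (V t) ≤ G x := by
    have h1 : G (V t) = ∫ s in (0:ℝ)..t, h' s := by rw [hftc, hG0]; ring
    calc G (V t) = ∫ s in (0:ℝ)..t, h' s := h1
      _ ≤ ∫ s in (0:ℝ)..t, F s := hh'leF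
      _ = ∫ s in (0:ℝ)..t, f s := hFf
      _ ≤ ∫ y in M..x, 1 / w y := hint
      _ = G x := hGx
  -- conclude V t ≤ x by strict monotonicity of G on [M, ∞)
  have hVtx : V t ≤ x := by
    by_contra hcon
    push_neg at hcon
    have hdiff : G (V t) - G x = ∫ y in x..(V t), 1 / W y := by
      have hadd := intervalIntegral.integral_add_adjacent_intervals
        (hWinv_intble M x le_rfl hx) (hWinv_intble x (V t) hx (hVM t ht))
      simp only [hGdef]
      linarith
    have hpos : 0 < ∫ y in x..(V t), 1 / W y := by
      apply intervalIntegral.intervalIntegral_pos_of_pos_on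
        (hWinv_intble x (V t) hx (hVM t ht))
      · intro y hy
        have : M ≤ y := hx.trans hy.1.le
        exact div_pos one_pos (hWposM y this)
      · exact hcon
    linarith
  exact (huV t ht).trans hVtx
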